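/- Fix 0 < c < p and λ > 0, k ≥ 1. The function u(w) = λ·(ln(p/w))^{1/k}·(w - c) on (c, p) attains its maximum at a unique point w* ∈ (c, p). -/

import Mathlib

open Real Set

theorem stmt_6 (c p lam k : ℝ) (hc : 0 < c) (hcp : c < p)
    (hlam : 0 < lam) (hk : 1 ≤ k)
    (u : ℝ → ℝ)
    (hu : ∀ w, u w = lam * (Real.log (p / w)) ^ ((1:ℝ) / k) * (w - c)) :
    ∃ ws ∈ Set.Ioo c p, IsMaxOn u (Set.Ioo c p) ws ∧
      ∀ w ∈ Set.Ioo c p, IsMaxOn u (Set.Ioo c p) w → w = ws := by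
  have hk0 : (0:ℝ) < k := lt_of_lt_of_le one_pos hk
  have hp : 0 < p := hc.trans hcp
  have hufun : u = fun w => lam * (Real.log (p / w)) ^ ((1:ℝ)/k) * (w - c) := funext hu
  subst hufun
  set h : ℝ → ℝ := fun w => Real.log (p / w) - (w - c) / (k * w) with hhdef
  -- derivative of log (p / ·)
  have hlogderiv : ∀ w : ℝ, 0 < w →
      HasDerivAt (fun w => Real.log (p / w)) (-w⁻¹) w := by
    intro w hw
    have h1 : HasDerivAt (fun w : ℝ => p / w) (p * -(w^2)⁻¹) w := by
      simpa [div_eq_mul_inv] using (hasDerivAt_inv hw.ne').const_mul p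
    have h2 : HasDerivAt (fun w => Real.log (p / w)) ((p * -(w^2)⁻¹) / (p / w)) w :=
      h1.log (div_ne_zero hp.ne' hw.ne')
    convert h2 using 1
    field_simp
  -- derivative of h
  have hhderiv : ∀ w : ℝ, 0 < w →
      HasDerivAt h (-w⁻¹ - (1 * (k * w) - (w - c) * k) / (k * w)^2) w := by
    intro w hw
    have hd2 : HasDerivAt (fun w : ℝ => k * w) k w := by
      simpa using (hasDerivAt_id w).const_mul k
    exact (hlogderiv w hw).sub
      (((hasDerivAt_id w).sub_const c).div hd2 (by positivity))
  have hderivh_neg : ∀ w : ℝ, 0 < w → deriv h w < 0 := by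
    intro w hw
    rw [(hhderiv w hw).deriv]
    have : (1 * (k * w) - (w - c) * k) = k * c := by ring
    rw [this]
    have h1 : 0 < (w:ℝ)⁻¹ := by positivity
    have h2 : 0 < k * c / (k * w)^2 := by positivity
    linarith
  -- continuity of h on sets of positive reals
  have hconth : ContinuousOn h (Icc c p) := by
    apply ContinuousOn.sub
    · apply ContinuousOn.log
      · exact continuousOn_const.div continuousOn_id fun x hx => (hc.trans_le hx.1).ne'
      · exact fun x hx => div_ne_zero hp.ne' (hc.trans_le hx.1).ne'
    · exact (continuousOn_id.sub continuousOn_const).div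
        (continuousOn_const.mul continuousOn_id)
        fun x hx => by have := hc.trans_le hx.1; positivity
  have hanti : StrictAntiOn h (Icc c p) :=
    strictAntiOn_of_deriv_neg (convex_Icc c p) hconth
      (fun x hx => hderivh_neg x (hc.trans (by rw [interior_Icc] at hx; exact hx.1)))
  -- IVT: find ws
  have hhc : 0 < h c := by
    have : h c = Real.log (p / c) := by simp [hhdef]
    rw [this]
    exact Real.log_pos ((one_lt_div hc).mpr hcp)
  have hhp : h p < 0 := by
    have : h p = -((p - c) / (k * p)) := by
      simp [hhdef, Real.log_div hp.ne' hp.ne']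
    rw [this]
    have : 0 < (p - c) / (k * p) := by
      have := sub_pos.mpr hcp; positivity
    linarith
  obtain ⟨ws, hws, hws0⟩ : ∃ ws ∈ Icc c p, h ws = 0 :=
    intermediate_value_Icc' hcp.le hconth ⟨hhp.le, hhc.le⟩
  have hwsc : c < ws := by
    rcases eq_or_lt_of_le hws.1 with h' | h'
    · exfalso; rw [← h'] at hws0; linarith
    · exact h'
  have hwsp : ws < p := by
    rcases eq_or_lt_of_le hws.2 with h' | h'
    · exfalso; rw [h'] at hws0; linarith
    · exact h'
  -- derivative of u
  have hgpos : ∀ w : ℝ, 0 < w → w < p → 0 < Real.log (p / w) := fun w hw hwp =>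
    Real.log_pos ((one_lt_div hw).mpr hwp)
  have huderiv : ∀ w : ℝ, 0 < w → w < p →
      HasDerivAt (fun w => lam * (Real.log (p / w)) ^ ((1:ℝ)/k) * (w - c))
        (lam * (Real.log (p / w)) ^ ((1:ℝ)/k - 1) * h w) w := by
    intro w hw hwp
    have hg : 0 < Real.log (p / w) := hgpos w hw hwp
    have h1 : HasDerivAt (fun w => (Real.log (p / w)) ^ ((1:ℝ)/k))
        (-w⁻¹ * ((1:ℝ)/k) * (Real.log (p / w)) ^ ((1:ℝ)/k - 1)) w :=
      (hlogderiv w hw).rpow_const (Or.inl hg.ne')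
    have h2 := ((h1.const_mul lam).mul ((hasDerivAt_id w).sub_const c))
    convert h2 using 1
    case e'_4 => rfl
    case e'_5 => rfl
    case e'_8 => rfl
    have hsplit : (Real.log (p / w)) ^ ((1:ℝ)/k) =
        (Real.log (p / w)) ^ ((1:ℝ)/k - 1) * Real.log (p / w) := by
      rw [← Real.rpow_add_one hg.ne' ((1:ℝ)/k - 1)]
      ring_nf
    rw [hhdef]
    simp only [mul_one, id]
    rw [hsplit]
    field_simp
    ring
  have hderivu_eq : ∀ w : ℝ, 0 < w → w < p →
      deriv (fun w => lam * (Real.log (p / w)) ^ ((1:ℝ)/k) * (w - c)) w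
        = lam * (Real.log (p / w)) ^ ((1:ℝ)/k - 1) * h w :=
    fun w hw hwp => (huderiv w hw hwp).deriv
  -- continuity of u on Icc c p
  have hcontu : ContinuousOn (fun w => lam * (Real.log (p / w)) ^ ((1:ℝ)/k) * (w - c))
      (Icc c p) := by
    apply ContinuousOn.mul
    · apply ContinuousOn.mul continuousOn_const
      apply ContinuousOn.rpow_const
      · apply ContinuousOn.log
        · exact continuousOn_const.div continuousOn_id fun x hx => (hc.trans_le hx.1).ne'
        · exact fun x hx => div_ne_zero hp.ne' (hc.trans_le hx.1).ne'
      · exact fun x hx => Or.inr (by positivity)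
    · exact continuousOn_id.sub continuousOn_const
  -- strict mono on Icc c ws
  have hmono : StrictMonoOn (fun w => lam * (Real.log (p / w)) ^ ((1:ℝ)/k) * (w - c))
      (Icc c ws) := by
    apply strictMonoOn_of_deriv_pos (convex_Icc c ws)
      (hcontu.mono (Icc_subset_Icc le_rfl hwsp.le))
    intro x hx
    rw [interior_Icc] at hx
    have hx0 : 0 < x := hc.trans hx.1
    have hxp : x < p := hx.2.trans hwsp
    rw [hderivu_eq x hx0 hxp]
    have hhx : 0 < h x := by
      have := hanti ⟨hx.1.le, hxp.le⟩ ⟨hwsc.le, hwsp.le⟩ hx.2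
      rw [hws0] at this; linarith
    have := Real.rpow_pos_of_pos (hgpos x hx0 hxp) ((1:ℝ)/k - 1)
    positivity
  -- strict anti on Icc ws p
  have hantiu : StrictAntiOn (fun w => lam * (Real.log (p / w)) ^ ((1:ℝ)/k) * (w - c))
      (Icc ws p) := by
    apply strictAntiOn_of_deriv_neg (convex_Icc ws p)
      (hcontu.mono (Icc_subset_Icc hwsc.le le_rfl))
    intro x hx
    rw [interior_Icc] at hx
    have hx0 : 0 < x := hc.trans (hwsc.trans hx.1)
    rw [hderivu_eq x hx0 hx.2]
    have hhx : h x < 0 := by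
      have := hanti ⟨hwsc.le, hwsp.le⟩ ⟨(hwsc.trans hx.1).le, hx.2.le⟩ hx.1
      rw [hws0] at this; linarith
    have h1 := Real.rpow_pos_of_pos (hgpos x hx0 hx.2) ((1:ℝ)/k - 1)
    have h2 : 0 < lam * Real.log (p / x) ^ ((1:ℝ)/k - 1) := by positivity
    calc lam * Real.log (p / x) ^ ((1:ℝ)/k - 1) * h x
        < lam * Real.log (p / x) ^ ((1:ℝ)/k - 1) * 0 := by
          exact mul_lt_mul_of_pos_left hhx h2
      _ = 0 := by ring
  have hmax : IsMaxOn (fun w => lam * (Real.log (p / w)) ^ ((1:ℝ)/k) * (w - c))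
      (Ioo c p) ws := by
    intro w hw
    simp only [mem_setOf_eq]
    rcases le_or_gt w ws with h' | h'
    · rcases h'.lt_or_eq with h'' | h''
      · exact (hmono ⟨hw.1.le, h'⟩ ⟨hwsc.le, le_rfl⟩ h'').le
      · rw [h'']
    · exact le_of_lt (hantiu ⟨le_rfl, hwsp.le⟩ ⟨h'.le, hw.2.le⟩ h')
  refine ⟨ws, ⟨hwsc, hwsp⟩, hmax, ?_⟩
  intro w hw hwmax
  by_contra hne
  rcases lt_or_gt_of_ne hne with h' | h'
  · have h1 : (fun w => lam * (Real.log (p / w)) ^ ((1:ℝ)/k) * (w - c)) w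
        < (fun w => lam * (Real.log (p / w)) ^ ((1:ℝ)/k) * (w - c)) ws :=
      hmono ⟨hw.1.le, h'.le⟩ ⟨hwsc.le, le_rfl⟩ h'
    have h2 := hwmax ⟨hwsc, hwsp⟩
    simp only [mem_setOf_eq] at h2
    linarith
  · have h1 : (fun w => lam * (Real.log (p / w)) ^ ((1:ℝ)/k) * (w - c)) ws
        > (fun w => lam * (Real.log (p / w)) ^ ((1:ℝ)/k) * (w - c)) w :=
      hantiu ⟨le_rfl, hwsp.le⟩ ⟨h'.le, hw.2.le⟩ h'
    have h2 := hwmax ⟨hwsc, hwsp⟩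
    simp only [mem_setOf_eq] at h2
    linarith
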